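/- Let u : ℝ → ℂ be in H¹(ℝ) and define the gauge transform φ(x) = exp((i/2)∫_{-∞}^x |u(y)|² dy) u(x). Then |φ(x)| = |u(x)| for all x, φ ∈ H¹(ℝ), and the map u ↦ φ is Lipschitz continuous on bounded subsets of H¹(ℝ): for u₁, u₂ in a ball of H¹ of radius M, ‖φ₁ − φ₂‖_{H¹} ≤ C(M) ‖u₁ − u₂‖_{H¹}. -/

import Mathlib

open MeasureTheory

/-- The gaugeDNLS transformation `φ(x) = exp((i/2)∫_{-∞}^x |u|² dy) u(x)` used for DNLS. -/
noncomputable def gaugeDNLS (u : ℝ → ℂ) : ℝ → ℂ := fun x =>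
  Complex.exp (Complex.I / 2 * ((∫ y in Set.Iio x, (‖u y‖) ^ 2 : ℝ) : ℂ)) * u x

/-- Membership in `H¹(ℝ)` (encoded via classical derivatives). -/
def InH1 (u : ℝ → ℂ) : Prop :=
  Differentiable ℝ u ∧ MemLp u 2 volume ∧ MemLp (deriv u) 2 volume

/-- The `H¹(ℝ)` norm. -/
noncomputable def H1Norm (u : ℝ → ℂ) : ℝ :=
  (eLpNorm u 2 volume).toReal + (eLpNorm (deriv u) 2 volume).toReal

open Set Filter
open scoped ENNReal NNReal

noncomputable def th (u : ℝ → ℂ) (x : ℝ) : ℝ := ∫ y in Set.Iio x, ‖u y‖ ^ 2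

lemma gauge_eq (u : ℝ → ℂ) :
    gaugeDNLS u = fun x => Complex.exp (Complex.I / 2 * (th u x : ℂ)) * u x := by
  funext x
  simp only [gaugeDNLS, th]

lemma integrable_nsq {u : ℝ → ℂ} (hu : MemLp u 2 volume) :
    Integrable (fun y => ‖u y‖ ^ 2) volume :=
  (memLp_two_iff_integrable_sq_norm hu.aestronglyMeasurable).mp hu

lemma th_nonneg (u : ℝ → ℂ) (x : ℝ) : 0 ≤ th u x :=
  setIntegral_nonneg measurableSet_Iio fun y _ => by positivity

lemma th_le {u : ℝ → ℂ} (hu : MemLp u 2 volume) (x : ℝ) :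
    th u x ≤ ∫ y, ‖u y‖ ^ 2 := by
  refine setIntegral_le_integral (integrable_nsq hu) ?_
  exact Filter.Eventually.of_forall fun y => by positivity

lemma th_eq {u : ℝ → ℂ} (hu : MemLp u 2 volume) (x : ℝ) :
    th u x = th u 0 + ∫ y in (0:ℝ)..x, ‖u y‖ ^ 2 := by
  have hI : ∀ a : ℝ, th u a = ∫ y in Iic a, ‖u y‖ ^ 2 := by
    intro a
    unfold th
    rw [Measure.restrict_congr_set Iio_ae_eq_Iic]
  rw [hI, hI, ← intervalIntegral.integral_Iic_sub_Iic
    ((integrable_nsq hu).integrableOn) ((integrable_nsq hu).integrableOn)]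
  ring

lemma hasDerivAt_th {u : ℝ → ℂ} (hc : Continuous u) (hu : MemLp u 2 volume) (x : ℝ) :
    HasDerivAt (th u) (‖u x‖ ^ 2) x := by
  have : th u = fun x => th u 0 + ∫ y in (0:ℝ)..x, ‖u y‖ ^ 2 := funext (th_eq hu)
  rw [this]
  exact (((hc.norm.pow 2).integral_hasStrictDerivAt 0 x).hasDerivAt).const_add _

lemma norm_exp_th (a : ℝ) : ‖Complex.exp (Complex.I / 2 * (a : ℂ))‖ = 1 := by
  rw [Complex.norm_exp]
  have : (Complex.I / 2 * (a : ℂ)).re = 0 := by simp [Complex.div_re]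
  rw [this, Real.exp_zero]

lemma hasDerivAt_gauge {u : ℝ → ℂ} (hu : InH1 u) (x : ℝ) :
    HasDerivAt (gaugeDNLS u)
      (Complex.I / 2 * ((‖u x‖ ^ 2 : ℝ) : ℂ) * Complex.exp (Complex.I / 2 * (th u x : ℂ)) * u x
        + Complex.exp (Complex.I / 2 * (th u x : ℂ)) * deriv u x) x := by
  rw [gauge_eq]
  have h1 : HasDerivAt (fun x => Complex.I / 2 * (th u x : ℂ))
      (Complex.I / 2 * ((‖u x‖ ^ 2 : ℝ) : ℂ)) x :=
    ((hasDerivAt_th hu.1.continuous hu.2.1 x).ofReal_comp).const_mul _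
  have h2 := (h1.cexp).mul ((hu.1 x).hasDerivAt)
  exact h2.congr_deriv (by ring)

lemma deriv_gauge {u : ℝ → ℂ} (hu : InH1 u) :
    deriv (gaugeDNLS u) = fun x =>
      Complex.I / 2 * ((‖u x‖ ^ 2 : ℝ) : ℂ) * Complex.exp (Complex.I / 2 * (th u x : ℂ)) * u x
        + Complex.exp (Complex.I / 2 * (th u x : ℂ)) * deriv u x :=
  funext fun x => (hasDerivAt_gauge hu x).deriv

lemma norm_gauge (u : ℝ → ℂ) (x : ℝ) : ‖gaugeDNLS u x‖ = ‖u x‖ := by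
  rw [gauge_eq]
  simp only [norm_mul, norm_exp_th, one_mul]

lemma limit_zero {f : ℝ → ℝ} (hf : Integrable f volume) {L : ℝ}
    (h : Tendsto f atBot (nhds L)) : L = 0 := by
  by_contra hL
  have hpos : 0 < |L| / 2 := by positivity
  have hev : ∀ᶠ x in atBot, dist (f x) L < |L| / 2 :=
    Metric.tendsto_nhds.mp h _ hpos
  obtain ⟨a, ha⟩ := eventually_atBot.mp hev
  have hconst : IntegrableOn (fun _ : ℝ => |L| / 2) (Iic a) volume := by
    refine Integrable.mono hf.integrableOn aestronglyMeasurable_const ?_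
    rw [ae_restrict_iff' measurableSet_Iic]
    refine Filter.Eventually.of_forall fun x hx => ?_
    have hd := ha x hx
    rw [Real.dist_eq] at hd
    simp only [Real.norm_eq_abs]
    rw [abs_of_nonneg (le_of_lt hpos)]
    have h1 : |L| ≤ |L - f x| + |f x| := by
      calc |L| = |(L - f x) + f x| := by ring_nf
      _ ≤ |L - f x| + |f x| := abs_add_le _ _
    rw [abs_sub_comm] at h1
    linarith
  rcases integrable_const_iff.mp hconst with h0 | hfin
  · have : |L| = 0 := by linarith [abs_nonneg L]
    exact hL (abs_eq_zero.mp this)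
  · have hfin := hfin.measure_univ_lt_top
    rw [Measure.restrict_apply_univ, Real.volume_Iic] at hfin
    exact (lt_irrefl _ hfin).elim

lemma hasDerivAt_normSq {u : ℝ → ℂ} (hu : InH1 u) (x : ℝ) :
    HasDerivAt (fun x => ‖u x‖ ^ 2)
      (2 * ((u x).re * (deriv u x).re + (u x).im * (deriv u x).im)) x := by
  have hre : HasDerivAt (fun x => (u x).re) ((deriv u x).re) x := by
    have := Complex.reCLM.hasFDerivAt.comp_hasDerivAt x (hu.1 x).hasDerivAt
    exact this
  have him : HasDerivAt (fun x => (u x).im) ((deriv u x).im) x := by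
    have := Complex.imCLM.hasFDerivAt.comp_hasDerivAt x (hu.1 x).hasDerivAt
    exact this
  have h : HasDerivAt (fun x => (u x).re ^ 2 + (u x).im ^ 2)
      (2 * ((u x).re * (deriv u x).re + (u x).im * (deriv u x).im)) x := by
    have := ((hre.pow 2).add (him.pow 2))
    exact this.congr_deriv (by norm_num; ring)
  have heq : (fun x => ‖u x‖ ^ 2) = fun x => (u x).re ^ 2 + (u x).im ^ 2 := by
    funext y
    rw [Complex.sq_norm, Complex.normSq_apply]
    ring
  rw [heq]
  exact h

lemma G_bound {u : ℝ → ℂ} (x : ℝ) :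
    |2 * ((u x).re * (deriv u x).re + (u x).im * (deriv u x).im)|
      ≤ ‖u x‖ ^ 2 + ‖deriv u x‖ ^ 2 := by
  have h2 : (u x).re * (deriv u x).re + (u x).im * (deriv u x).im
      = (u x * (starRingEnd ℂ) (deriv u x)).re := by
    simp [Complex.mul_re]
  have h1 : |(u x * (starRingEnd ℂ) (deriv u x)).re| ≤ ‖u x‖ * ‖deriv u x‖ := by
    calc |(u x * (starRingEnd ℂ) (deriv u x)).re|
        ≤ ‖u x * (starRingEnd ℂ) (deriv u x)‖ := Complex.abs_re_le_norm _
      _ = ‖u x‖ * ‖deriv u x‖ := by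
          rw [norm_mul, Complex.norm_conj]
  rw [h2, abs_mul]
  have h3 : |(2:ℝ)| = 2 := by norm_num
  rw [h3]
  nlinarith [sq_nonneg (‖u x‖ - ‖deriv u x‖), norm_nonneg (u x), norm_nonneg (deriv u x)]

lemma sq_norm_le_int {u : ℝ → ℂ} (hu : InH1 u) (x : ℝ) :
    ‖u x‖ ^ 2 ≤ (∫ y, ‖u y‖ ^ 2) + ∫ y, ‖deriv u y‖ ^ 2 := by
  set G : ℝ → ℝ := fun x => 2 * ((u x).re * (deriv u x).re + (u x).im * (deriv u x).im) with hG
  have hsum : Integrable (fun y => ‖u y‖ ^ 2 + ‖deriv u y‖ ^ 2) volume :=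
    (integrable_nsq hu.2.1).add (integrable_nsq hu.2.2)
  have hw : AEStronglyMeasurable (deriv u) volume := hu.2.2.aestronglyMeasurable
  have hwre : AEStronglyMeasurable (fun x => (deriv u x).re) volume :=
    (Complex.measurable_re.comp_aemeasurable hw.aemeasurable).aestronglyMeasurable
  have hwim : AEStronglyMeasurable (fun x => (deriv u x).im) volume :=
    (Complex.measurable_im.comp_aemeasurable hw.aemeasurable).aestronglyMeasurable
  have hure : Continuous fun x => (u x).re := Complex.continuous_re.comp hu.1.continuous
  have huim : Continuous fun x => (u x).im := Complex.continuous_im.comp hu.1.continuous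
  have hGmeas : AEStronglyMeasurable G volume :=
    (((hure.aestronglyMeasurable.mul hwre).add
      (huim.aestronglyMeasurable.mul hwim)).const_mul 2)
  have hGint : Integrable G volume := by
    refine Integrable.mono' hsum hGmeas ?_
    exact Filter.Eventually.of_forall fun y => by
      simpa only [Real.norm_eq_abs] using G_bound (u := u) y
  have hFTC : ∀ a b : ℝ, (∫ y in a..b, G y) = ‖u b‖ ^ 2 - ‖u a‖ ^ 2 := fun a b =>
    intervalIntegral.integral_eq_sub_of_hasDerivAt
      (fun t _ => hasDerivAt_normSq hu t) hGint.intervalIntegrable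
  have htend : Tendsto (fun x : ℝ => ‖u x‖ ^ 2)
      atBot (nhds (‖u 0‖ ^ 2 - ∫ y in Iic 0, G y)) := by
    have h1 : Tendsto (fun x : ℝ => ∫ y in x..0, G y) atBot (nhds (∫ y in Iic 0, G y)) :=
      intervalIntegral_tendsto_integral_Iic 0 hGint.integrableOn tendsto_id
    have h2 : (fun x : ℝ => ‖u x‖ ^ 2) = fun x => ‖u 0‖ ^ 2 - ∫ y in x..0, G y := by
      funext a
      have := hFTC a 0
      linarith
    rw [h2]
    exact tendsto_const_nhds.sub h1
  have hL : ‖u 0‖ ^ 2 - ∫ y in Iic 0, G y = 0 := limit_zero (integrable_nsq hu.2.1) htend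
  have hIic : (∫ y in Iic x, G y) - ∫ y in Iic 0, G y = ∫ y in (0:ℝ)..x, G y :=
    intervalIntegral.integral_Iic_sub_Iic hGint.integrableOn hGint.integrableOn
  have hFx : ‖u x‖ ^ 2 = ∫ y in Iic x, G y := by
    have h1 := hFTC 0 x
    linarith
  rw [hFx]
  calc (∫ y in Iic x, G y) ≤ ∫ y in Iic x, (‖u y‖ ^ 2 + ‖deriv u y‖ ^ 2) := by
        refine integral_mono_ae hGint.integrableOn hsum.integrableOn ?_
        exact Filter.Eventually.of_forall fun y =>
          le_trans (le_abs_self _) (G_bound (u := u) y)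
    _ ≤ ∫ y, (‖u y‖ ^ 2 + ‖deriv u y‖ ^ 2) :=
        setIntegral_le_integral hsum (Filter.Eventually.of_forall fun y => by positivity)
    _ = _ := integral_add (integrable_nsq hu.2.1) (integrable_nsq hu.2.2)

lemma toReal_eLpNorm_sq {E : Type*} [NormedAddCommGroup E] {f : ℝ → E}
    (hf : MemLp f 2 volume) :
    ((eLpNorm f 2 volume).toReal) ^ 2 = ∫ y, ‖f y‖ ^ 2 := by
  rw [hf.eLpNorm_eq_integral_rpow_norm two_ne_zero ENNReal.ofNat_ne_top]
  have h2 : ((2 : ℝ≥0∞)).toReal = (2 : ℝ) := by norm_num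
  rw [h2]
  have hpos : (0:ℝ) ≤ ∫ a, ‖f a‖ ^ (2:ℝ) := by
    refine integral_nonneg fun y => ?_
    positivity
  rw [ENNReal.toReal_ofReal (by positivity)]
  have hre : ∀ a, ‖f a‖ ^ (2:ℝ) = ‖f a‖ ^ (2:ℕ) := fun a => by
    rw [← Real.rpow_natCast]; norm_num
  have : (∫ a, ‖f a‖ ^ (2:ℝ)) = ∫ y, ‖f y‖ ^ 2 := by
    refine integral_congr_ae (Filter.Eventually.of_forall fun a => hre a)
  rw [this] at hpos ⊢
  rw [← Real.rpow_natCast ((∫ y, ‖f y‖ ^ 2) ^ (2:ℝ)⁻¹) 2, ← Real.rpow_mul hpos]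
  norm_num

lemma norm_le_H1 {u : ℝ → ℂ} (hu : InH1 u) (x : ℝ) : ‖u x‖ ≤ H1Norm u := by
  have h := sq_norm_le_int hu x
  rw [← toReal_eLpNorm_sq hu.2.1, ← toReal_eLpNorm_sq hu.2.2] at h
  have h1 : (0:ℝ) ≤ (eLpNorm u 2 volume).toReal := ENNReal.toReal_nonneg
  have h2 : (0:ℝ) ≤ (eLpNorm (deriv u) 2 volume).toReal := ENNReal.toReal_nonneg
  unfold H1Norm
  nlinarith [norm_nonneg (u x)]

lemma cauchy_schwarz {f g : ℝ → ℂ} (hf : MemLp f 2 volume) (hg : MemLp g 2 volume) :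
    ∫ y, ‖f y‖ * ‖g y‖ ≤ (eLpNorm f 2 volume).toReal * (eLpNorm g 2 volume).toReal := by
  have hconj : (2:ℝ).HolderConjugate 2 := by
    constructor <;> norm_num
  have h2 : ENNReal.ofReal (2:ℝ) = 2 := by norm_num
  have hfn : MemLp (fun y => ‖f y‖) (ENNReal.ofReal (2:ℝ)) volume := by rw [h2]; exact hf.norm
  have hgn : MemLp (fun y => ‖g y‖) (ENNReal.ofReal (2:ℝ)) volume := by rw [h2]; exact hg.norm
  have := integral_mul_le_Lp_mul_Lq_of_nonneg hconj
    (Filter.Eventually.of_forall fun y => norm_nonneg (f y))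
    (Filter.Eventually.of_forall fun y => norm_nonneg (g y)) hfn hgn
  refine le_trans this ?_
  have key : ∀ (h : ℝ → ℂ), MemLp h 2 volume →
      (∫ a, ‖h a‖ ^ (2:ℝ)) ^ ((1:ℝ)/2) = (eLpNorm h 2 volume).toReal := by
    intro h hh
    have hptw : ∀ a, ‖h a‖ ^ (2:ℝ) = ‖h a‖ ^ (2:ℕ) := fun a => by
      rw [← Real.rpow_natCast]; norm_num
    have hre : (∫ a, ‖h a‖ ^ (2:ℝ)) = ∫ y, ‖h y‖ ^ 2 :=
      integral_congr_ae (Filter.Eventually.of_forall fun a => hptw a)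
    rw [hre, ← toReal_eLpNorm_sq hh]
    rw [← Real.rpow_natCast ((eLpNorm h 2 volume).toReal) 2, ← Real.rpow_mul ENNReal.toReal_nonneg]
    norm_num
  rw [key f hf, key g hg]

noncomputable def t2 {E : Type*} [NormedAddCommGroup E] (f : ℝ → E) : ℝ :=
  (eLpNorm f 2 volume).toReal

lemma H1Norm_eq (u : ℝ → ℂ) : H1Norm u = t2 u + t2 (deriv u) := rfl

lemma t2_nonneg {E : Type*} [NormedAddCommGroup E] (f : ℝ → E) : 0 ≤ t2 f :=
  ENNReal.toReal_nonneg

lemma t2_mono {E F : Type*} [NormedAddCommGroup E] [NormedAddCommGroup F]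
    {f : ℝ → E} {g : ℝ → F} (hg : MemLp g 2 volume) (h : ∀ x, ‖f x‖ ≤ ‖g x‖) :
    t2 f ≤ t2 g :=
  ENNReal.toReal_mono hg.2.ne (eLpNorm_mono h)

lemma t2_add_le {E : Type*} [NormedAddCommGroup E] {f g : ℝ → E}
    (hf : MemLp f 2 volume) (hg : MemLp g 2 volume) :
    t2 (fun x => f x + g x) ≤ t2 f + t2 g := by
  have h := eLpNorm_add_le hf.aestronglyMeasurable hg.aestronglyMeasurable one_le_two
  have hfin : eLpNorm f 2 volume + eLpNorm g 2 volume ≠ ⊤ :=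
    ENNReal.add_ne_top.mpr ⟨hf.2.ne, hg.2.ne⟩
  calc t2 (fun x => f x + g x) ≤ (eLpNorm f 2 volume + eLpNorm g 2 volume).toReal :=
        ENNReal.toReal_mono hfin h
    _ = t2 f + t2 g := ENNReal.toReal_add hf.2.ne hg.2.ne

lemma t2_le_mul {E F : Type*} [NormedAddCommGroup E] [NormedAddCommGroup F]
    {f : ℝ → E} {g : ℝ → F} {c : ℝ} (hg : MemLp g 2 volume) (hc : 0 ≤ c)
    (h : ∀ x, ‖f x‖ ≤ c * ‖g x‖) : t2 f ≤ c * t2 g := by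
  have h1 : eLpNorm f 2 volume ≤ eLpNorm (fun x => c * ‖g x‖) 2 volume :=
    eLpNorm_mono_real fun x => by
      have : (0:ℝ) ≤ c * ‖g x‖ := mul_nonneg hc (norm_nonneg _)
      simpa using h x
  have h2 : eLpNorm (fun x => c * ‖g x‖) 2 volume = (‖c‖₊ : ℝ≥0∞) * eLpNorm g 2 volume := by
    have : (fun x => c * ‖g x‖) = c • (fun x => ‖g x‖) := rfl
    rw [this, eLpNorm_const_smul, eLpNorm_norm, enorm_eq_nnnorm]
  rw [h2] at h1
  have h3 : ((‖c‖₊ : ℝ≥0∞) * eLpNorm g 2 volume) ≠ ⊤ :=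
    ENNReal.mul_ne_top ENNReal.coe_ne_top hg.2.ne
  calc t2 f ≤ ((‖c‖₊ : ℝ≥0∞) * eLpNorm g 2 volume).toReal := ENNReal.toReal_mono h3 h1
    _ = ‖c‖ * t2 g := by rw [ENNReal.toReal_mul, ENNReal.coe_toReal, coe_nnnorm]; rfl
    _ = c * t2 g := by rw [Real.norm_eq_abs, abs_of_nonneg hc]

lemma th_continuous {u : ℝ → ℂ} (hu : InH1 u) : Continuous (th u) :=
  continuous_iff_continuousAt.mpr fun x =>
    (hasDerivAt_th hu.1.continuous hu.2.1 x).continuousAt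

lemma E_continuous {u : ℝ → ℂ} (hu : InH1 u) :
    Continuous (fun x => Complex.exp (Complex.I / 2 * (th u x : ℂ))) :=
  Complex.continuous_exp.comp
    (continuous_const.mul (Complex.continuous_ofReal.comp (th_continuous hu)))

lemma inH1_gauge {u : ℝ → ℂ} (hu : InH1 u) : InH1 (gaugeDNLS u) := by
  have hdiff : Differentiable ℝ (gaugeDNLS u) := fun x =>
    (hasDerivAt_gauge hu x).differentiableAt
  have hmem : MemLp (gaugeDNLS u) 2 volume :=
    hu.2.1.of_le hdiff.continuous.aestronglyMeasurable
      (Filter.Eventually.of_forall fun x => le_of_eq (norm_gauge u x))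
  set K := H1Norm u with hK
  have hKbound : ∀ x, ‖u x‖ ≤ K := norm_le_H1 hu
  have hK0 : 0 ≤ K := le_trans (norm_nonneg _) (hKbound 0)
  have hg : MemLp (fun x => K ^ 2 / 2 * ‖u x‖ + ‖deriv u x‖) 2 volume :=
    (hu.2.1.norm.const_mul (K ^ 2 / 2)).add hu.2.2.norm
  refine ⟨hdiff, hmem, ?_⟩
  rw [deriv_gauge hu]
  refine MemLp.of_le hg ?_ ?_
  · have hc1 : Continuous (fun x =>
        Complex.I / 2 * ((‖u x‖ ^ 2 : ℝ) : ℂ) * Complex.exp (Complex.I / 2 * (th u x : ℂ)) * u x) :=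
      ((continuous_const.mul (Complex.continuous_ofReal.comp
        ((hu.1.continuous.norm).pow 2))).mul (E_continuous hu)).mul hu.1.continuous
    exact hc1.aestronglyMeasurable.add
      ((E_continuous hu).aestronglyMeasurable.mul hu.2.2.aestronglyMeasurable)
  · refine Filter.Eventually.of_forall fun x => ?_
    have hb1 : ‖Complex.I / 2 * ((‖u x‖ ^ 2 : ℝ) : ℂ)
        * Complex.exp (Complex.I / 2 * (th u x : ℂ)) * u x‖ ≤ K ^ 2 / 2 * ‖u x‖ := by
      simp only [norm_mul, norm_exp_th, mul_one]
      have hI : ‖Complex.I / 2‖ = 1 / 2 := by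
        rw [norm_div]
        simp
      rw [hI, Complex.norm_real, Real.norm_eq_abs, abs_of_nonneg (by positivity)]
      have h1 : ‖u x‖ ^ 2 ≤ K ^ 2 := by nlinarith [hKbound x, norm_nonneg (u x)]
      nlinarith [norm_nonneg (u x)]
    have hb2 : ‖Complex.exp (Complex.I / 2 * (th u x : ℂ)) * deriv u x‖ = ‖deriv u x‖ := by
      rw [norm_mul, norm_exp_th, one_mul]
    calc ‖_ + _‖ ≤ _ + _ := norm_add_le _ _
      _ ≤ K ^ 2 / 2 * ‖u x‖ + ‖deriv u x‖ := by rw [hb2]; exact add_le_add hb1 le_rfl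
      _ ≤ ‖K ^ 2 / 2 * ‖u x‖ + ‖deriv u x‖‖ := le_abs_self _

lemma deriv_sub_eq {u₁ u₂ : ℝ → ℂ} (h₁ : Differentiable ℝ u₁) (h₂ : Differentiable ℝ u₂) :
    deriv (u₁ - u₂) = fun x => deriv u₁ x - deriv u₂ x := by
  funext x
  have : u₁ - u₂ = fun y => u₁ y - u₂ y := rfl
  rw [deriv_sub (h₁ x) (h₂ x)]

lemma inH1_sub {u₁ u₂ : ℝ → ℂ} (h₁ : InH1 u₁) (h₂ : InH1 u₂) : InH1 (u₁ - u₂) := by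
  refine ⟨h₁.1.sub h₂.1, h₁.2.1.sub h₂.2.1, ?_⟩
  rw [deriv_sub_eq h₁.1 h₂.1]
  exact h₁.2.2.sub h₂.2.2

lemma exp_diff_le (a b : ℝ) :
    ‖Complex.exp (Complex.I / 2 * (a : ℂ)) - Complex.exp (Complex.I / 2 * (b : ℂ))‖
      ≤ 1 / 2 * |a - b| := by
  have hd : ∀ t : ℝ, HasDerivAt (fun s : ℝ => Complex.exp (Complex.I / 2 * (s : ℂ)))
      (Complex.I / 2 * Complex.exp (Complex.I / 2 * (t : ℂ))) t := by
    intro t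
    have h1 : HasDerivAt (fun s : ℝ => Complex.I / 2 * (s : ℂ)) (Complex.I / 2) t := by
      simpa using ((hasDerivAt_id t).ofReal_comp).const_mul (Complex.I / 2)
    have := h1.cexp
    convert this using 1
    ring
  have hb : ∀ x ∈ (Set.univ : Set ℝ),
      ‖Complex.I / 2 * Complex.exp (Complex.I / 2 * (x : ℂ))‖ ≤ 1 / 2 := by
    intro x _
    rw [norm_mul, norm_exp_th, mul_one, norm_div]
    simp
  have := (convex_univ (𝕜 := ℝ)).norm_image_sub_le_of_norm_hasDerivWithin_le
    (fun x _ => (hd x).hasDerivWithinAt) hb (Set.mem_univ b) (Set.mem_univ a)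
  simpa [Real.norm_eq_abs] using this

lemma th_diff_le {u₁ u₂ : ℝ → ℂ} (h₁ : InH1 u₁) (h₂ : InH1 u₂) (x : ℝ) :
    |th u₁ x - th u₂ x| ≤ (t2 u₁ + t2 u₂) * t2 (u₁ - u₂) := by
  have hd : InH1 (u₁ - u₂) := inH1_sub h₁ h₂
  have hc₁ := h₁.1.continuous
  have hc₂ := h₂.1.continuous
  have hcd : Continuous (u₁ - u₂) := hd.1.continuous
  set h : ℝ → ℝ := fun y => ‖u₁ y‖ ^ 2 - ‖u₂ y‖ ^ 2 with hh
  have hint : Integrable h volume := (integrable_nsq h₁.2.1).sub (integrable_nsq h₂.2.1)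
  have hstep1 : th u₁ x - th u₂ x = ∫ y in Iio x, h y := by
    unfold th
    rw [← integral_sub (integrable_nsq h₁.2.1).integrableOn (integrable_nsq h₂.2.1).integrableOn]
  have habs : ∀ y, |h y| ≤ (‖u₁ y‖ + ‖u₂ y‖) * ‖(u₁ - u₂) y‖ := by
    intro y
    have h1 : |‖u₁ y‖ - ‖u₂ y‖| ≤ ‖(u₁ - u₂) y‖ := by
      simpa using abs_norm_sub_norm_le (u₁ y) (u₂ y)
    have h2 : h y = (‖u₁ y‖ - ‖u₂ y‖) * (‖u₁ y‖ + ‖u₂ y‖) := by rw [hh]; ring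
    have h3 : |‖u₁ y‖ + ‖u₂ y‖| = ‖u₁ y‖ + ‖u₂ y‖ := abs_of_nonneg (by positivity)
    rw [h2, abs_mul, h3]
    nlinarith [mul_le_mul_of_nonneg_right h1
      (show (0:ℝ) ≤ ‖u₁ y‖ + ‖u₂ y‖ by positivity)]
  have hprod1 : Integrable (fun y => ‖u₁ y‖ * ‖(u₁ - u₂) y‖) volume := by
    refine Integrable.mono' ((integrable_nsq h₁.2.1).add (integrable_nsq hd.2.1))
      ((hc₁.norm.mul hcd.norm).aestronglyMeasurable) ?_
    refine Filter.Eventually.of_forall fun y => ?_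
    rw [Real.norm_eq_abs, abs_of_nonneg (by positivity)]
    simp only [Pi.add_apply]
    nlinarith [sq_nonneg (‖u₁ y‖ - ‖(u₁ - u₂) y‖)]
  have hprod2 : Integrable (fun y => ‖u₂ y‖ * ‖(u₁ - u₂) y‖) volume := by
    refine Integrable.mono' ((integrable_nsq h₂.2.1).add (integrable_nsq hd.2.1))
      ((hc₂.norm.mul hcd.norm).aestronglyMeasurable) ?_
    refine Filter.Eventually.of_forall fun y => ?_
    rw [Real.norm_eq_abs, abs_of_nonneg (by positivity)]
    simp only [Pi.add_apply]
    nlinarith [sq_nonneg (‖u₂ y‖ - ‖(u₁ - u₂) y‖)]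
  have hmaj : Integrable (fun y => (‖u₁ y‖ + ‖u₂ y‖) * ‖(u₁ - u₂) y‖) volume := by
    have : (fun y => (‖u₁ y‖ + ‖u₂ y‖) * ‖(u₁ - u₂) y‖)
        = fun y => ‖u₁ y‖ * ‖(u₁ - u₂) y‖ + ‖u₂ y‖ * ‖(u₁ - u₂) y‖ := by
      funext y; ring
    rw [this]
    exact hprod1.add hprod2
  calc |th u₁ x - th u₂ x| = |∫ y in Iio x, h y| := by rw [hstep1]
    _ ≤ ∫ y in Iio x, |h y| := by
        have := norm_integral_le_integral_norm (μ := volume.restrict (Iio x)) h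
        simpa [Real.norm_eq_abs] using this
    _ ≤ ∫ y, |h y| := setIntegral_le_integral hint.abs
        (Filter.Eventually.of_forall fun y => abs_nonneg _)
    _ ≤ ∫ y, (‖u₁ y‖ + ‖u₂ y‖) * ‖(u₁ - u₂) y‖ :=
        integral_mono_ae hint.abs hmaj (Filter.Eventually.of_forall habs)
    _ = (∫ y, ‖u₁ y‖ * ‖(u₁ - u₂) y‖) + ∫ y, ‖u₂ y‖ * ‖(u₁ - u₂) y‖ := by
        rw [← integral_add hprod1 hprod2]
        congr 1
        funext y
        ring
    _ ≤ t2 u₁ * t2 (u₁ - u₂) + t2 u₂ * t2 (u₁ - u₂) :=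
        add_le_add (cauchy_schwarz h₁.2.1 hd.2.1) (cauchy_schwarz h₂.2.1 hd.2.1)
    _ = (t2 u₁ + t2 u₂) * t2 (u₁ - u₂) := by ring

lemma normI2 : ‖Complex.I / 2‖ = 1 / 2 := by
  rw [norm_div]
  simp

lemma sq_diff_ptwise (z w : ℂ) : |‖z‖ ^ 2 - ‖w‖ ^ 2| ≤ (‖z‖ + ‖w‖) * ‖z - w‖ := by
  have h1 : |‖z‖ - ‖w‖| ≤ ‖z - w‖ := abs_norm_sub_norm_le z w
  have h2 : ‖z‖ ^ 2 - ‖w‖ ^ 2 = (‖z‖ - ‖w‖) * (‖z‖ + ‖w‖) := by ring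
  have h3 : |‖z‖ + ‖w‖| = ‖z‖ + ‖w‖ := abs_of_nonneg (by positivity)
  rw [h2, abs_mul, h3]
  nlinarith [mul_le_mul_of_nonneg_right h1 (show (0:ℝ) ≤ ‖z‖ + ‖w‖ by positivity)]

theorem stmt_12 :
    (∀ u : ℝ → ℂ, ∀ x, ‖gaugeDNLS u x‖ = ‖u x‖) ∧
    (∀ u : ℝ → ℂ, InH1 u → InH1 (gaugeDNLS u)) ∧
    (∀ M > (0 : ℝ), ∃ C > (0 : ℝ), ∀ u₁ u₂ : ℝ → ℂ, InH1 u₁ → InH1 u₂ →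
      H1Norm u₁ ≤ M → H1Norm u₂ ≤ M →
      H1Norm (gaugeDNLS u₁ - gaugeDNLS u₂) ≤ C * H1Norm (u₁ - u₂)) := by
  refine ⟨fun u x => ?_, fun u hu => inH1_gauge hu, ?_⟩
  · have := norm_gauge u x
    simpa using this
  intro M hM
  refine ⟨2 + 4 * M ^ 2 + M ^ 4, by positivity, ?_⟩
  intro u₁ u₂ h₁ h₂ hM₁ hM₂
  have hd : InH1 (u₁ - u₂) := inH1_sub h₁ h₂
  set δ := H1Norm (u₁ - u₂) with hδ
  have hδ0 : 0 ≤ δ := by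
    rw [hδ, H1Norm_eq]
    have := t2_nonneg (u₁ - u₂)
    have := t2_nonneg (deriv (u₁ - u₂))
    linarith
  have htd : t2 (u₁ - u₂) ≤ δ := by
    rw [hδ, H1Norm_eq]; linarith [t2_nonneg (deriv (u₁ - u₂))]
  have htd' : t2 (deriv (u₁ - u₂)) ≤ δ := by
    rw [hδ, H1Norm_eq]; linarith [t2_nonneg (u₁ - u₂)]
  have ht₁ : t2 u₁ ≤ M := by
    have := H1Norm_eq u₁; have := t2_nonneg (deriv u₁); linarith
  have ht₂ : t2 u₂ ≤ M := by
    have := H1Norm_eq u₂; have := t2_nonneg (deriv u₂); linarith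
  have ht₁' : t2 (deriv u₁) ≤ M := by
    have := H1Norm_eq u₁; have := t2_nonneg u₁; linarith
  have hu₁M : ∀ x, ‖u₁ x‖ ≤ M := fun x => le_trans (norm_le_H1 h₁ x) hM₁
  have hu₂M : ∀ x, ‖u₂ x‖ ≤ M := fun x => le_trans (norm_le_H1 h₂ x) hM₂
  set E₁ : ℝ → ℂ := fun x => Complex.exp (Complex.I / 2 * (th u₁ x : ℂ)) with hE₁
  set E₂ : ℝ → ℂ := fun x => Complex.exp (Complex.I / 2 * (th u₂ x : ℂ)) with hE₂
  have hEdiff : ∀ x, ‖E₁ x - E₂ x‖ ≤ M * δ := by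
    intro x
    calc ‖E₁ x - E₂ x‖ ≤ 1 / 2 * |th u₁ x - th u₂ x| := exp_diff_le _ _
      _ ≤ 1 / 2 * ((t2 u₁ + t2 u₂) * t2 (u₁ - u₂)) := by
          have := th_diff_le h₁ h₂ x
          linarith
      _ ≤ 1 / 2 * ((M + M) * δ) := by
          have hmm := mul_le_mul (show t2 u₁ + t2 u₂ ≤ M + M by linarith) htd
            (t2_nonneg _) (by linarith)
          linarith
      _ = M * δ := by ring
  have hE₁c : Continuous E₁ := E_continuous h₁
  have hE₂c : Continuous E₂ := E_continuous h₂
  have hE₁n : ∀ x, ‖E₁ x‖ = 1 := fun x => norm_exp_th _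
  have hE₂n : ∀ x, ‖E₂ x‖ = 1 := fun x => norm_exp_th _
  -- L² part
  set A : ℝ → ℂ := fun x => E₁ x * (u₁ x - u₂ x) with hA
  set B : ℝ → ℂ := fun x => (E₁ x - E₂ x) * u₂ x with hB
  have heq : gaugeDNLS u₁ - gaugeDNLS u₂ = fun x => A x + B x := by
    funext x
    show gaugeDNLS u₁ x - gaugeDNLS u₂ x = _
    rw [gauge_eq u₁, gauge_eq u₂, hA, hB]
    ring
  have hAbound : ∀ x, ‖A x‖ ≤ 1 * ‖(u₁ - u₂) x‖ := fun x => by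
    rw [hA, norm_mul, hE₁n, one_mul]
    simp [Pi.sub_apply]
  have hBbound : ∀ x, ‖B x‖ ≤ (M * δ) * ‖u₂ x‖ := fun x => by
    rw [hB, norm_mul]
    exact mul_le_mul_of_nonneg_right (hEdiff x) (norm_nonneg _)
  have hAmem : MemLp A 2 volume :=
    MemLp.of_le_mul hd.2.1 ((hE₁c.mul hd.1.continuous).aestronglyMeasurable) 
      (Filter.Eventually.of_forall hAbound)
  have hBmem : MemLp B 2 volume :=
    MemLp.of_le_mul h₂.2.1 (((hE₁c.sub hE₂c).mul h₂.1.continuous).aestronglyMeasurable)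
      (Filter.Eventually.of_forall hBbound)
  have hL2 : t2 (gaugeDNLS u₁ - gaugeDNLS u₂) ≤ δ + M * δ * M := by
    rw [heq]
    calc t2 (fun x => A x + B x) ≤ t2 A + t2 B := t2_add_le hAmem hBmem
      _ ≤ 1 * t2 (u₁ - u₂) + (M * δ) * t2 u₂ := by
          refine add_le_add (t2_le_mul hd.2.1 (by norm_num) hAbound)
            (t2_le_mul h₂.2.1 (by positivity) hBbound)
      _ ≤ δ + M * δ * M := by
          have h1 := mul_le_mul_of_nonneg_left ht₂ (by positivity : (0:ℝ) ≤ M * δ)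
          linarith
  -- derivative part
  set T₁ : ℝ → ℂ := fun x =>
    Complex.I / 2 * ((‖u₁ x‖ ^ 2 - ‖u₂ x‖ ^ 2 : ℝ) : ℂ) * E₁ x * u₁ x with hT₁
  set T₂ : ℝ → ℂ := fun x =>
    Complex.I / 2 * ((‖u₂ x‖ ^ 2 : ℝ) : ℂ) * (E₁ x - E₂ x) * u₁ x with hT₂
  set T₃ : ℝ → ℂ := fun x =>
    Complex.I / 2 * ((‖u₂ x‖ ^ 2 : ℝ) : ℂ) * E₂ x * (u₁ x - u₂ x) with hT₃
  set T₄ : ℝ → ℂ := fun x => (E₁ x - E₂ x) * deriv u₁ x with hT₄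
  set T₅ : ℝ → ℂ := fun x => E₂ x * (deriv u₁ x - deriv u₂ x) with hT₅
  have hg₁ := inH1_gauge h₁
  have hg₂ := inH1_gauge h₂
  have hder : deriv (gaugeDNLS u₁ - gaugeDNLS u₂)
      = fun x => T₁ x + T₂ x + T₃ x + T₄ x + T₅ x := by
    rw [deriv_sub_eq hg₁.1 hg₂.1, deriv_gauge h₁, deriv_gauge h₂]
    funext x
    rw [hT₁, hT₂, hT₃, hT₄, hT₅]
    push_cast
    ring
  -- pointwise bounds
  have hb₁ : ∀ x, ‖T₁ x‖ ≤ (M * M) * ‖(u₁ - u₂) x‖ := by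
    intro x
    have habs : |‖u₁ x‖ ^ 2 - ‖u₂ x‖ ^ 2| ≤ (M + M) * ‖(u₁ - u₂) x‖ := by
      refine le_trans (sq_diff_ptwise (u₁ x) (u₂ x)) ?_
      have : (u₁ - u₂) x = u₁ x - u₂ x := rfl
      rw [this]
      gcongr <;> [exact hu₁M x; exact hu₂M x]
    calc ‖T₁ x‖ = 1 / 2 * |‖u₁ x‖ ^ 2 - ‖u₂ x‖ ^ 2| * ‖u₁ x‖ := by
          rw [hT₁]
          simp only [norm_mul, normI2, hE₁n, Complex.norm_real, Real.norm_eq_abs]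
          ring
      _ ≤ 1 / 2 * ((M + M) * ‖(u₁ - u₂) x‖) * M := by
          have h0 : (0:ℝ) ≤ (M + M) * ‖(u₁ - u₂) x‖ := by positivity
          nlinarith [mul_le_mul habs (hu₁M x) (norm_nonneg (u₁ x)) h0]
      _ = (M * M) * ‖(u₁ - u₂) x‖ := by ring
  have hb₂ : ∀ x, ‖T₂ x‖ ≤ (1 / 2 * M ^ 2 * (M * δ)) * ‖u₁ x‖ := by
    intro x
    calc ‖T₂ x‖ = 1 / 2 * |‖u₂ x‖ ^ 2| * ‖E₁ x - E₂ x‖ * ‖u₁ x‖ := by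
          rw [hT₂]
          simp only [norm_mul, normI2, Complex.norm_real, Real.norm_eq_abs]
      _ ≤ 1 / 2 * M ^ 2 * (M * δ) * ‖u₁ x‖ := by
          have h1 : |‖u₂ x‖ ^ 2| ≤ M ^ 2 := by
            rw [abs_of_nonneg (by positivity)]
            nlinarith [hu₂M x, norm_nonneg (u₂ x)]
          gcongr 1 / 2 * ?_ * ?_ * ‖u₁ x‖ <;>
            first
            | exact h1
            | exact hEdiff x
  have hb₃ : ∀ x, ‖T₃ x‖ ≤ (1 / 2 * M ^ 2) * ‖(u₁ - u₂) x‖ := by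
    intro x
    have hsub : (u₁ - u₂) x = u₁ x - u₂ x := rfl
    calc ‖T₃ x‖ = 1 / 2 * |‖u₂ x‖ ^ 2| * ‖(u₁ - u₂) x‖ := by
          rw [hT₃, hsub]
          simp only [norm_mul, normI2, hE₂n, Complex.norm_real, Real.norm_eq_abs]
          ring
      _ ≤ 1 / 2 * M ^ 2 * ‖(u₁ - u₂) x‖ := by
          have h1 : |‖u₂ x‖ ^ 2| ≤ M ^ 2 := by
            rw [abs_of_nonneg (by positivity)]
            nlinarith [hu₂M x, norm_nonneg (u₂ x)]
          gcongr 1 / 2 * ?_ * ‖(u₁ - u₂) x‖ <;>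
            first
            | exact h1
            | skip
  have hb₄ : ∀ x, ‖T₄ x‖ ≤ (M * δ) * ‖deriv u₁ x‖ := by
    intro x
    rw [hT₄, norm_mul]
    exact mul_le_mul_of_nonneg_right (hEdiff x) (norm_nonneg _)
  have hb₅ : ∀ x, ‖T₅ x‖ ≤ 1 * ‖deriv (u₁ - u₂) x‖ := by
    intro x
    rw [hT₅, norm_mul, hE₂n, one_mul, congrFun (deriv_sub_eq h₁.1 h₂.1) x]
    exact le_of_eq (one_mul _).symm
  -- MemLp of the pieces
  have hT₁m : MemLp T₁ 2 volume :=
    MemLp.of_le_mul hd.2.1 ((((continuous_const.mul (Complex.continuous_ofReal.comp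
      ((h₁.1.continuous.norm.pow 2).sub (h₂.1.continuous.norm.pow 2)))).mul hE₁c).mul
      h₁.1.continuous).aestronglyMeasurable) (Filter.Eventually.of_forall hb₁)
  have hT₂m : MemLp T₂ 2 volume :=
    MemLp.of_le_mul h₁.2.1 ((((continuous_const.mul (Complex.continuous_ofReal.comp
      (h₂.1.continuous.norm.pow 2))).mul (hE₁c.sub hE₂c)).mul
      h₁.1.continuous).aestronglyMeasurable) (Filter.Eventually.of_forall hb₂)
  have hT₃m : MemLp T₃ 2 volume :=
    MemLp.of_le_mul hd.2.1 ((((continuous_const.mul (Complex.continuous_ofReal.comp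
      (h₂.1.continuous.norm.pow 2))).mul hE₂c).mul
      hd.1.continuous).aestronglyMeasurable) (Filter.Eventually.of_forall hb₃)
  have hT₄m : MemLp T₄ 2 volume :=
    MemLp.of_le_mul h₁.2.2 (((hE₁c.sub hE₂c).aestronglyMeasurable).mul
      h₁.2.2.aestronglyMeasurable) (Filter.Eventually.of_forall hb₄)
  have hT₅m : MemLp T₅ 2 volume :=
    MemLp.of_le_mul hd.2.2 ((hE₂c.aestronglyMeasurable).mul
      (h₁.2.2.sub h₂.2.2).aestronglyMeasurable) (Filter.Eventually.of_forall hb₅)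
  -- t2 bounds
  have htT₁ : t2 T₁ ≤ (M * M) * δ := by
    refine le_trans (t2_le_mul hd.2.1 (by positivity) hb₁) ?_
    exact mul_le_mul_of_nonneg_left htd (by positivity)
  have htT₂ : t2 T₂ ≤ (1 / 2 * M ^ 2 * (M * δ)) * M := by
    refine le_trans (t2_le_mul h₁.2.1 (by positivity) hb₂) ?_
    exact mul_le_mul_of_nonneg_left ht₁ (by positivity)
  have htT₃ : t2 T₃ ≤ (1 / 2 * M ^ 2) * δ := by
    refine le_trans (t2_le_mul hd.2.1 (by positivity) hb₃) ?_
    exact mul_le_mul_of_nonneg_left htd (by positivity)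
  have htT₄ : t2 T₄ ≤ (M * δ) * M := by
    refine le_trans (t2_le_mul h₁.2.2 (by positivity) hb₄) ?_
    exact mul_le_mul_of_nonneg_left ht₁' (by positivity)
  have htT₅ : t2 T₅ ≤ 1 * δ := by
    refine le_trans (t2_le_mul hd.2.2 (by norm_num) hb₅) ?_
    linarith
  have hderiv2 : t2 (deriv (gaugeDNLS u₁ - gaugeDNLS u₂))
      ≤ (M * M) * δ + (1 / 2 * M ^ 2 * (M * δ)) * M + (1 / 2 * M ^ 2) * δ
        + (M * δ) * M + 1 * δ := by
    rw [hder]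
    have s5 : t2 (fun x => T₁ x + T₂ x + T₃ x + T₄ x + T₅ x)
        ≤ t2 (fun x => T₁ x + T₂ x + T₃ x + T₄ x) + t2 T₅ :=
      t2_add_le (f := fun x => T₁ x + T₂ x + T₃ x + T₄ x) (g := T₅)
        (((hT₁m.add hT₂m).add hT₃m).add hT₄m) hT₅m
    have s4 : t2 (fun x => T₁ x + T₂ x + T₃ x + T₄ x)
        ≤ t2 (fun x => T₁ x + T₂ x + T₃ x) + t2 T₄ :=
      t2_add_le (f := fun x => T₁ x + T₂ x + T₃ x) (g := T₄)
        ((hT₁m.add hT₂m).add hT₃m) hT₄m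
    have s3 : t2 (fun x => T₁ x + T₂ x + T₃ x)
        ≤ t2 (fun x => T₁ x + T₂ x) + t2 T₃ :=
      t2_add_le (f := fun x => T₁ x + T₂ x) (g := T₃) (hT₁m.add hT₂m) hT₃m
    have s2 : t2 (fun x => T₁ x + T₂ x) ≤ t2 T₁ + t2 T₂ :=
      t2_add_le (f := T₁) (g := T₂) hT₁m hT₂m
    linarith
  have hfinal : H1Norm (gaugeDNLS u₁ - gaugeDNLS u₂)
      = t2 (gaugeDNLS u₁ - gaugeDNLS u₂) + t2 (deriv (gaugeDNLS u₁ - gaugeDNLS u₂)) :=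
    H1Norm_eq _
  rw [hfinal]
  have hM0 : (0:ℝ) < M := hM
  nlinarith [hL2, hderiv2, mul_nonneg (sq_nonneg M) hδ0,
    mul_nonneg (mul_nonneg (sq_nonneg M) (sq_nonneg M)) hδ0]
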